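/- arXiv:2101.01095 — 2 statements merged into one kernel-verified Lean document; each statement's English description precedes it below -/
import Mathlib

section
/- If the macroscopic displacement field is linear, u(x) = s·x for a constant s, then the peridynamic stress at the origin, defined as σ = ∫₀^∞ ∫₀^∞ ω(r+t)(u(r) − u(−t)) dt dr, equals s · ∫₀^∞ ξ² ω(ξ) dξ. -/
open MeasureTheory Set
open scoped ENNReal NNReal

/-- For a linear displacement `u(x) = s·x`, the peridynamic stress at the
origin, summing bond forces over all bonds crossing `0`, equals
`s · ∫₀^∞ ξ² ω(ξ) dξ`. -/
theorem stmt_2 (ω : ℝ → ℝ) (hmeas : Measurable ω)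
    (hint : IntegrableOn (fun ξ => ξ ^ 2 * |ω ξ|) (Set.Ioi (0 : ℝ)) volume)
    (s : ℝ) (u : ℝ → ℝ) (hu : ∀ x, u x = s * x) :
    (∫ r in Set.Ioi (0 : ℝ), ∫ t in Set.Ioi (0 : ℝ), ω (r + t) * (u r - u (-t)))
      = s * ∫ ξ in Set.Ioi (0 : ℝ), ξ ^ 2 * ω ξ := by
  set g : ℝ → ℝ := fun ξ => ξ * ω ξ with hg
  have hgmeas : Measurable g := measurable_id.mul hmeas
  -- Step 0: simplify the integrand
  have h0 : ∀ r t : ℝ, ω (r + t) * (u r - u (-t)) = s * g (r + t) := by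
    intro r t; simp only [hu, hg]; ring
  simp only [h0]
  -- Step 1: translation of the inner integral
  have h1 : ∀ r : ℝ, (∫ t in Ioi (0 : ℝ), g (r + t)) = ∫ ξ in Ioi r, g ξ := by
    intro r
    have hind : ∀ t : ℝ, (Ioi (0 : ℝ)).indicator (fun t => g (r + t)) t
        = (Ioi r).indicator g (r + t) := by
      intro t
      by_cases ht : t ∈ Ioi (0 : ℝ)
      · rw [indicator_of_mem ht, indicator_of_mem (by simpa using ht.out)]
      · rw [indicator_of_notMem ht, indicator_of_notMem]
        simpa using ht
    rw [← integral_indicator measurableSet_Ioi, ← integral_indicator measurableSet_Ioi]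
    calc ∫ t, (Ioi (0 : ℝ)).indicator (fun t => g (r + t)) t
        = ∫ t, (Ioi r).indicator g (r + t) := by simp only [hind]
      _ = ∫ x, (Ioi r).indicator g x := integral_add_left_eq_self _ r
  simp only [integral_const_mul, h1]
  congr 1
  -- Step 2: rewrite as an indicator integral over Ioi 0
  have h2 : (∫ r in Ioi (0 : ℝ), ∫ ξ in Ioi r, g ξ)
      = ∫ r in Ioi (0 : ℝ), ∫ ξ in Ioi (0 : ℝ), (Ioi r).indicator g ξ := by
    refine setIntegral_congr_fun measurableSet_Ioi fun r hr => ?_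
    rw [setIntegral_indicator measurableSet_Ioi]
    congr 1
    rw [Ioi_inter_Ioi, max_eq_right (le_of_lt hr.out)]
  rw [h2]
  -- integrability on the product
  set μ := volume.restrict (Ioi (0 : ℝ))
  have hFmeas : Measurable (fun p : ℝ × ℝ => (Ioi p.1).indicator g p.2) := by
    have : (fun p : ℝ × ℝ => (Ioi p.1).indicator g p.2)
        = fun p : ℝ × ℝ => if p.1 < p.2 then g p.2 else 0 := by
      funext p; by_cases h : p.1 < p.2
      · rw [if_pos h, indicator_of_mem (by simpa using h)]
      · rw [if_neg h, indicator_of_notMem (by simpa using h)]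
    rw [this]
    exact Measurable.ite (measurableSet_lt measurable_fst measurable_snd)
      (hgmeas.comp measurable_snd) measurable_const
  have hinner : ∀ ξ ∈ Ioi (0 : ℝ),
      (∫⁻ r, ‖(Ioi r).indicator g ξ‖₊ ∂μ) = ENNReal.ofReal ξ * ‖g ξ‖₊ := by
    intro ξ hξ
    have : ∀ r : ℝ, (‖(Ioi r).indicator g ξ‖₊ : ℝ≥0∞)
        = (Iio ξ).indicator (fun _ => (‖g ξ‖₊ : ℝ≥0∞)) r := by
      intro r
      by_cases h : r < ξ
      · rw [indicator_of_mem (by simpa using h), indicator_of_mem (by simpa using h)]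
      · rw [indicator_of_notMem (by simpa using h), indicator_of_notMem (by simpa using h)]
        simp
    simp only [this]
    rw [lintegral_indicator measurableSet_Iio, lintegral_const,
      Measure.restrict_restrict measurableSet_Iio, Measure.restrict_apply MeasurableSet.univ,
      Set.univ_inter]
    have : Iio ξ ∩ Ioi (0 : ℝ) = Ioo 0 ξ := by
      ext x; simp [mem_Ioo, and_comm]
    rw [this, Real.volume_Ioo, sub_zero, mul_comm]
  have hFint : Integrable (fun p : ℝ × ℝ => (Ioi p.1).indicator g p.2) (μ.prod μ) := by
    refine ⟨hFmeas.aestronglyMeasurable, ?_⟩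
    rw [HasFiniteIntegral, lintegral_prod_symm _ hFmeas.enorm.aemeasurable]
    have heq : (∫⁻ ξ, ∫⁻ r, ‖(Ioi r).indicator g ξ‖₊ ∂μ ∂μ)
        = ∫⁻ ξ in Ioi (0 : ℝ), ENNReal.ofReal (ξ ^ 2 * |ω ξ|) := by
      refine setLIntegral_congr_fun measurableSet_Ioi (fun ξ hξ => ?_)
      rw [hinner ξ hξ]
      have hξ0 : (0 : ℝ) ≤ ξ := le_of_lt hξ.out
      rw [← enorm_eq_nnnorm, Real.enorm_eq_ofReal_abs, ← ENNReal.ofReal_mul hξ0]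
      congr 1
      simp only [hg, abs_mul, abs_of_nonneg hξ0]
      ring
    erw [heq]
    have := hint.2
    rw [HasFiniteIntegral] at this
    refine lt_of_le_of_lt (le_of_eq ?_) this
    refine setLIntegral_congr_fun measurableSet_Ioi (fun ξ hξ => ?_)
    rw [Real.enorm_eq_ofReal_abs]
    congr 1
    exact (abs_of_nonneg (by positivity)).symm
  -- Fubini
  rw [integral_integral_swap hFint]
  -- compute the inner integral after swapping
  have h3 : ∀ ξ ∈ Ioi (0 : ℝ), (∫ r in Ioi (0 : ℝ), (Ioi r).indicator g ξ) = ξ * g ξ := by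
    intro ξ hξ
    have : ∀ r : ℝ, (Ioi r).indicator g ξ = (Iio ξ).indicator (fun _ => g ξ) r := by
      intro r
      by_cases h : r < ξ
      · rw [indicator_of_mem (by simpa using h), indicator_of_mem (by simpa using h)]
      · rw [indicator_of_notMem (by simpa using h), indicator_of_notMem (by simpa using h)]
    simp only [this]
    rw [setIntegral_indicator measurableSet_Iio]
    have : Ioi (0 : ℝ) ∩ Iio ξ = Ioo 0 ξ := Ioi_inter_Iio
    rw [this, setIntegral_const, Real.volume_real_Ioo, sub_zero,
      max_eq_left (le_of_lt hξ.out), smul_eq_mul]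
  rw [setIntegral_congr_fun measurableSet_Ioi h3]
  refine setIntegral_congr_fun measurableSet_Ioi fun ξ hξ => ?_
  simp only [hg]; ring
end

section
/- Let ω : ℝ → ℝ be even, integrable, with ξ²ω(ξ) integrable, and suppose u : ℝ → ℝ is four times continuously differentiable with bounded fourth derivative. Then for the rescaled kernel ω_ε(ξ) = ε^{-3} ω(ξ/ε) supported in [−ε,ε], the nonlocal operator L_{ω_ε}[u](x) = ∫_{−ε}^{ε} ω_ε(ξ)(u(x+ξ) − u(x)) dξ converges as ε → 0 to C u''(x), where C = (1/2)∫_{−1}^{1} ξ² ω(ξ) dξ. -/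
open MeasureTheory

lemma abs_le_of_mem_uIcc_zero {a t : ℝ} (ht : t ∈ Set.uIcc (0 : ℝ) a) : |t| ≤ |a| := by
  rcases le_total 0 a with h0 | h0
  · rw [Set.uIcc_of_le h0] at ht
    rw [abs_of_nonneg ht.1, abs_of_nonneg h0]; exact ht.2
  · rw [Set.uIcc_of_ge h0] at ht
    rw [abs_of_nonpos ht.2, abs_of_nonpos h0]; linarith [ht.1]

lemma mvt_aux (f f' : ℝ → ℝ) (C a : ℝ) (hf : ∀ t, HasDerivAt f (f' t) t)
    (hC : ∀ s, |s| ≤ |a| → |f' s| ≤ C) : |f a - f 0| ≤ C * |a| := by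
  have := (convex_uIcc (0 : ℝ) a).norm_image_sub_le_of_norm_deriv_le
    (f := f) (fun y _ => (hf y).differentiableAt)
    (fun y hy => by
      rw [(hf y).deriv]
      exact hC y (abs_le_of_mem_uIcc_zero hy))
    (Set.left_mem_uIcc) (Set.right_mem_uIcc)
  simpa [Real.norm_eq_abs] using this

lemma taylor_aux {u : ℝ → ℝ} (hu : ContDiff ℝ 4 u) (x : ℝ) :
    ∃ K, 0 ≤ K ∧ ∀ h : ℝ, |h| ≤ 1 →
      |u (x + h) - u x - h * deriv u x - h ^ 2 / 2 * deriv (deriv u) x| ≤ K * |h| ^ 3 := by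
  have hu4 : ContDiff ℝ ((1 + 3 : ℕ) : ℕ) u := by exact_mod_cast hu
  have h31 : ContDiff ℝ ((1 : ℕ) : ℕ) (deriv^[3] u) := ContDiff.iterate_deriv' 1 3 hu4
  have hiter3 : deriv^[3] u = deriv (deriv (deriv u)) := by
    simp [Function.iterate_succ_apply', Function.iterate_zero_apply]
  have hd3cont : Continuous (deriv (deriv (deriv u))) := by
    rw [← hiter3]; exact h31.continuous
  have hdu : Differentiable ℝ u := hu.differentiable (by norm_num)
  have hu3 : ContDiff ℝ ((2 + 2 : ℕ) : ℕ) u := by exact_mod_cast hu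
  have h22 : ContDiff ℝ ((2 : ℕ) : ℕ) (deriv^[2] u) := ContDiff.iterate_deriv' 2 2 hu3
  have hiter2 : deriv^[2] u = deriv (deriv u) := by
    simp [Function.iterate_succ_apply', Function.iterate_zero_apply]
  have hdd : Differentiable ℝ (deriv (deriv u)) := by
    rw [← hiter2]; exact h22.differentiable (by norm_num)
  have hu31 : ContDiff ℝ ((3 + 1 : ℕ) : ℕ) u := by exact_mod_cast hu
  have h13 : ContDiff ℝ ((3 : ℕ) : ℕ) (deriv^[1] u) := ContDiff.iterate_deriv' 3 1 hu31
  have hd1 : Differentiable ℝ (deriv u) := by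
    have := h13.differentiable (by norm_num)
    simpa using this
  obtain ⟨M, hM⟩ := (isCompact_Icc (a := x - 1) (b := x + 1)).exists_bound_of_continuousOn
    hd3cont.continuousOn
  set M' := max M 0 with hM'def
  have hM'0 : 0 ≤ M' := le_max_right _ _
  have hM' : ∀ y ∈ Set.Icc (x - 1) (x + 1), |deriv (deriv (deriv u)) y| ≤ M' := by
    intro y hy
    have := (hM y hy).trans (le_max_left M 0)
    rwa [Real.norm_eq_abs] at this
  set d1 := deriv u x with hd1def
  set d2 := deriv (deriv u) x with hd2def
  refine ⟨M', hM'0, fun h hh => ?_⟩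
  have hmem : ∀ s : ℝ, |s| ≤ 1 → x + s ∈ Set.Icc (x - 1) (x + 1) := by
    intro s hs
    rw [abs_le] at hs
    constructor <;> simp <;> linarith [hs.1, hs.2]
  -- Step 1
  have step1 : ∀ t : ℝ, |t| ≤ 1 → |deriv (deriv u) (x + t) - d2| ≤ M' * |t| := by
    intro t ht
    have := (convex_Icc (x - 1) (x + 1)).norm_image_sub_le_of_norm_deriv_le
      (f := deriv (deriv u)) (fun y _ => hdd y)
      (fun y hy => by simpa [Real.norm_eq_abs] using hM' y hy)
      (hmem 0 (by norm_num)) (hmem t ht)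
    simpa [Real.norm_eq_abs, abs_sub_comm] using this
  have hinner : ∀ t : ℝ, HasDerivAt (fun s : ℝ => x + s) 1 t := by
    intro t; simpa using (hasDerivAt_id t).const_add x
  have hDu : ∀ t : ℝ, HasDerivAt (fun s => u (x + s)) (deriv u (x + t)) t := by
    intro t
    simpa [Function.comp_def] using ((hdu (x + t)).hasDerivAt.comp t (hinner t))
  have hDdu : ∀ t : ℝ, HasDerivAt (fun s => deriv u (x + s)) (deriv (deriv u) (x + t)) t := by
    intro t
    simpa [Function.comp_def] using ((hd1 (x + t)).hasDerivAt.comp t (hinner t))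
  have hg1 : ∀ t : ℝ, HasDerivAt (fun s => deriv u (x + s) - d1 - s * d2)
      (deriv (deriv u) (x + t) - d2) t := by
    intro t
    have h1 := (hDdu t).sub_const d1
    have h2 : HasDerivAt (fun s : ℝ => s * d2) d2 t := by
      simpa using (hasDerivAt_id t).mul_const d2
    exact h1.sub h2
  -- Step 2
  have step2 : ∀ t : ℝ, |t| ≤ |h| → |deriv u (x + t) - d1 - t * d2| ≤ (M' * |h|) * |t| := by
    intro t ht
    have := mvt_aux (fun s => deriv u (x + s) - d1 - s * d2)
      (fun s => deriv (deriv u) (x + s) - d2) (M' * |h|) t hg1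
      (fun s hs => by
        have hs1 : |s| ≤ 1 := hs.trans (ht.trans hh)
        exact (step1 s hs1).trans (by
          have : |s| ≤ |h| := hs.trans ht
          nlinarith [abs_nonneg s]))
    simpa [hd1def] using this
  -- Step 3
  have hg : ∀ t : ℝ, HasDerivAt (fun s => u (x + s) - u x - s * d1 - s ^ 2 / 2 * d2)
      (deriv u (x + t) - d1 - t * d2) t := by
    intro t
    have h1 := (hDu t).sub_const (u x)
    have h2 : HasDerivAt (fun s : ℝ => s * d1) d1 t := by
      simpa using (hasDerivAt_id t).mul_const d1
    have h3 : HasDerivAt (fun s : ℝ => s ^ 2 / 2 * d2) (t * d2) t := by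
      have : HasDerivAt (fun s : ℝ => s ^ 2) (2 * t) t := by
        simpa [mul_comm] using (hasDerivAt_pow 2 t)
      have := (this.div_const 2).mul_const d2
      rw [show t * d2 = 2 * t / 2 * d2 by ring]
      exact this
    exact (h1.sub h2).sub h3
  have final := mvt_aux (fun s => u (x + s) - u x - s * d1 - s ^ 2 / 2 * d2)
    (fun s => deriv u (x + s) - d1 - s * d2) (M' * |h| * |h|) h hg
    (fun s hs => (step2 s hs).trans (mul_le_mul_of_nonneg_left hs (mul_nonneg hM'0 (abs_nonneg h))))
  have : |u (x + h) - u x - h * d1 - h ^ 2 / 2 * d2| ≤ M' * |h| * |h| * |h| := by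
    simpa using final
  calc |u (x + h) - u x - h * d1 - h ^ 2 / 2 * d2| ≤ M' * |h| * |h| * |h| := this
    _ = M' * |h| ^ 3 := by ring
/-- For an even integrable kernel `ω` with `ξ²ω(ξ)` integrable on `[−1,1]` and
`u ∈ C⁴` with bounded fourth derivative, the rescaled nonlocal operator
`L_{ω_ε}[u](x) = ∫_{−ε}^{ε} ε⁻³ ω(ξ/ε)(u(x+ξ) − u(x)) dξ` converges as
`ε → 0⁺` to `C u''(x)` with `C = (1/2)∫_{−1}^{1} ξ² ω(ξ) dξ`. -/
theorem stmt_5 (ω : ℝ → ℝ)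
    (heven : ∀ ξ, ω (-ξ) = ω ξ)
    (hint : MeasureTheory.IntegrableOn ω (Set.Icc (-1 : ℝ) 1) volume)
    (hint2 : MeasureTheory.IntegrableOn (fun ξ => ξ ^ 2 * ω ξ) (Set.Icc (-1 : ℝ) 1) volume)
    (u : ℝ → ℝ) (hu : ContDiff ℝ 4 u)
    (hbdd : ∃ M : ℝ, ∀ x, |iteratedDeriv 4 u x| ≤ M)
    (x : ℝ) :
    Filter.Tendsto
      (fun ε : ℝ =>
        ∫ ξ in Set.Icc (-ε) ε, (ε ^ 3)⁻¹ * ω (ξ / ε) * (u (x + ξ) - u x))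
      (nhdsWithin 0 (Set.Ioi 0))
      (nhds (((1 / 2) * ∫ ξ in Set.Icc (-1 : ℝ) 1, ξ ^ 2 * ω ξ) * deriv (deriv u) x)) := by
  obtain ⟨K, hK0, hK⟩ := taylor_aux hu x
  set d1 := deriv u x with hd1def
  set d2 := deriv (deriv u) x with hd2def
  set L := ((1 / 2) * ∫ ξ in Set.Icc (-1 : ℝ) 1, ξ ^ 2 * ω ξ) * d2 with hLdef
  set F := fun ε : ℝ => ∫ ξ in Set.Icc (-ε) ε, (ε ^ 3)⁻¹ * ω (ξ / ε) * (u (x + ξ) - u x)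
    with hFdef
  have hucont : Continuous u := hu.continuous
  have hω : IntervalIntegrable ω volume (-1) 1 :=
    (intervalIntegrable_iff_integrableOn_Icc_of_le (by norm_num)).mpr hint
  have hω2 : IntervalIntegrable (fun ξ => ξ ^ 2 * ω ξ) volume (-1) 1 :=
    (intervalIntegrable_iff_integrableOn_Icc_of_le (by norm_num)).mpr hint2
  have hωid : IntervalIntegrable (fun η => η * ω η) volume (-1) 1 :=
    hω.continuousOn_mul continuous_id.continuousOn
  set A := ∫ η in Set.Ioc (-1 : ℝ) 1, |ω η| with hAdef
  have hA0 : 0 ≤ A := integral_nonneg fun _ => abs_nonneg _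
  have hωabsInt : IntegrableOn (fun η => |ω η|) (Set.Ioc (-1 : ℝ) 1) volume :=
    (hint.mono_set Set.Ioc_subset_Icc_self).abs
  -- odd integral vanishes
  have hodd : (∫ η in (-1 : ℝ)..1, η * ω η) = 0 := by
    have h1 : (∫ η in (-1 : ℝ)..1, (fun y => y * ω y) (-η)) = ∫ η in (-1 : ℝ)..1, η * ω η := by
      rw [intervalIntegral.integral_comp_neg (fun y => y * ω y)]
      norm_num
    have h2 : (∫ η in (-1 : ℝ)..1, (fun y => y * ω y) (-η))
        = -∫ η in (-1 : ℝ)..1, η * ω η := by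
      have : ∀ η : ℝ, (-η) * ω (-η) = -(η * ω η) := by
        intro η; rw [heven]; ring
      simp only [this]
      exact intervalIntegral.integral_neg
    linarith [h1, h2.symm.trans h1]
  have hC2 : (∫ ξ in Set.Icc (-1 : ℝ) 1, ξ ^ 2 * ω ξ) = ∫ ξ in (-1 : ℝ)..1, ξ ^ 2 * ω ξ := by
    rw [intervalIntegral.integral_of_le (by norm_num), integral_Icc_eq_integral_Ioc]
  -- the key estimate
  have key : ∀ ε ∈ Set.Ioo (0 : ℝ) 1, |F ε - L| ≤ (K * A) * ε := by
    rintro ε ⟨hε0, hε1⟩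
    have hεne : ε ≠ 0 := ne_of_gt hε0
    set R : ℝ → ℝ := fun h => u (x + h) - u x - h * d1 - h ^ 2 / 2 * d2 with hRdef
    have hRcont : Continuous R := by
      apply Continuous.sub
      apply Continuous.sub
      apply Continuous.sub
      · exact hucont.comp (continuous_const.add continuous_id)
      · exact continuous_const
      · exact continuous_id.mul continuous_const
      · exact ((continuous_pow 2).div_const 2).mul continuous_const
    -- change of variables
    have hstep1 : F ε = ∫ η in (-1 : ℝ)..1, (ε ^ 3)⁻¹ * ω η * (u (x + ε * η) - u x) * ε := by
      have hsub : (fun ξ => (ε ^ 3)⁻¹ * ω (ξ / ε) * (u (x + ξ) - u x))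
          = fun ξ => (fun η => (ε ^ 3)⁻¹ * ω η * (u (x + ε * η) - u x)) (ξ / ε) := by
        funext ξ
        simp only
        rw [mul_comm ε (ξ / ε), div_mul_cancel₀ ξ hεne]
      have : F ε = ∫ ξ in (-ε)..ε, (ε ^ 3)⁻¹ * ω (ξ / ε) * (u (x + ξ) - u x) := by
        rw [hFdef]
        simp only
        rw [intervalIntegral.integral_of_le (by linarith), integral_Icc_eq_integral_Ioc]
      have hcd := intervalIntegral.integral_comp_div (a := -ε) (b := ε) (c := ε)
        (f := fun η => (ε ^ 3)⁻¹ * ω η * (u (x + ε * η) - u x)) hεne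
      rw [this, hsub, hcd, neg_div, div_self hεne, smul_eq_mul,
        ← intervalIntegral.integral_const_mul]
      congr 1
      funext η
      ring
    -- decompose the integrand
    have hdecomp : ∀ η : ℝ, (ε ^ 3)⁻¹ * ω η * (u (x + ε * η) - u x) * ε
        = ω η * ((ε ^ 2)⁻¹ * R (ε * η)) + (ε⁻¹ * d1) * (η * ω η)
          + (d2 / 2) * (η ^ 2 * ω η) := by
      intro η
      rw [hRdef]
      simp only
      field_simp
      ring
    have hT1int : IntervalIntegrable (fun η => ω η * ((ε ^ 2)⁻¹ * R (ε * η))) volume (-1) 1 :=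
      hω.mul_continuousOn
        ((continuous_const.mul (hRcont.comp (continuous_const.mul continuous_id))).continuousOn)
    have hT2int : IntervalIntegrable (fun η => (ε⁻¹ * d1) * (η * ω η)) volume (-1) 1 :=
      hωid.const_mul _
    have hT3int : IntervalIntegrable (fun η => (d2 / 2) * (η ^ 2 * ω η)) volume (-1) 1 :=
      hω2.const_mul _
    have hsplit : F ε = (∫ η in (-1 : ℝ)..1, ω η * ((ε ^ 2)⁻¹ * R (ε * η)))
        + (∫ η in (-1 : ℝ)..1, (ε⁻¹ * d1) * (η * ω η))
        + ∫ η in (-1 : ℝ)..1, (d2 / 2) * (η ^ 2 * ω η) := by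
      rw [hstep1]
      simp only [hdecomp]
      rw [intervalIntegral.integral_add (hT1int.add hT2int) hT3int,
        intervalIntegral.integral_add hT1int hT2int]
    have hI2 : (∫ η in (-1 : ℝ)..1, (ε⁻¹ * d1) * (η * ω η)) = 0 := by
      rw [intervalIntegral.integral_const_mul, hodd, mul_zero]
    have hI3 : (∫ η in (-1 : ℝ)..1, (d2 / 2) * (η ^ 2 * ω η)) = L := by
      rw [intervalIntegral.integral_const_mul, hLdef, hC2]
      ring
    have hdiff : F ε - L = ∫ η in (-1 : ℝ)..1, ω η * ((ε ^ 2)⁻¹ * R (ε * η)) := by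
      rw [hsplit, hI2, hI3]; ring
    -- estimate the remainder term
    rw [hdiff, intervalIntegral.integral_of_le (by norm_num)]
    have hbound : ∀ᵐ η ∂(volume.restrict (Set.Ioc (-1 : ℝ) 1)),
        ‖ω η * ((ε ^ 2)⁻¹ * R (ε * η))‖ ≤ (K * ε) * |ω η| := by
      rw [ae_restrict_iff' measurableSet_Ioc]
      refine Filter.Eventually.of_forall fun η hη => ?_
      have hη1 : |η| ≤ 1 := by
        rw [abs_le]; exact ⟨le_of_lt hη.1, hη.2⟩
      have hεη : |ε * η| ≤ 1 := by
        rw [abs_mul, abs_of_pos hε0]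
        nlinarith [abs_nonneg η]
      have hR := hK (ε * η) hεη
      have hεη3 : |ε * η| ^ 3 ≤ ε ^ 3 := by
        have : |ε * η| ≤ ε := by
          rw [abs_mul, abs_of_pos hε0]
          nlinarith [abs_nonneg η]
        exact pow_le_pow_left₀ (abs_nonneg _) this 3
      have hRle : |R (ε * η)| ≤ K * ε ^ 3 := by
        calc |R (ε * η)| ≤ K * |ε * η| ^ 3 := hR
          _ ≤ K * ε ^ 3 := by nlinarith
      have hfac : (ε ^ 2)⁻¹ * |R (ε * η)| ≤ K * ε := by
        rw [inv_mul_le_iff₀ (by positivity)]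
        calc |R (ε * η)| ≤ K * ε ^ 3 := hRle
          _ ≤ ε ^ 2 * (K * ε) := le_of_eq (by ring)
      rw [Real.norm_eq_abs, abs_mul, abs_mul, abs_of_pos (by positivity : (0:ℝ) < (ε ^ 2)⁻¹)]
      calc |ω η| * ((ε ^ 2)⁻¹ * |R (ε * η)|) ≤ |ω η| * (K * ε) :=
            mul_le_mul_of_nonneg_left hfac (abs_nonneg _)
        _ = (K * ε) * |ω η| := by ring
    calc |∫ η in Set.Ioc (-1 : ℝ) 1, ω η * ((ε ^ 2)⁻¹ * R (ε * η))|
        ≤ ∫ η in Set.Ioc (-1 : ℝ) 1, (K * ε) * |ω η| :=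
          norm_integral_le_of_norm_le (hωabsInt.const_mul _) hbound
      _ = (K * ε) * A := by rw [MeasureTheory.integral_const_mul]
      _ = (K * A) * ε := by ring
  -- conclude by squeezing
  have htend : Filter.Tendsto (fun ε : ℝ => (K * A) * ε) (nhdsWithin 0 (Set.Ioi 0)) (nhds 0) := by
    have hc : Continuous (fun ε : ℝ => (K * A) * ε) := continuous_const.mul continuous_id
    have h0 := hc.tendsto 0
    simp only [mul_zero] at h0
    exact h0.mono_left nhdsWithin_le_nhds
  have hnorm : Filter.Tendsto (fun ε : ℝ => ‖F ε - L‖) (nhdsWithin 0 (Set.Ioi 0)) (nhds 0) := by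
    refine squeeze_zero' (Filter.Eventually.of_forall fun _ => norm_nonneg _) ?_ htend
    filter_upwards [Ioo_mem_nhdsGT_of_mem (by norm_num : (0 : ℝ) ∈ Set.Ico (0 : ℝ) 1)] with ε hε
    rw [Real.norm_eq_abs]
    exact key ε hε
  exact tendsto_iff_norm_sub_tendsto_zero.mpr hnorm
end
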